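/- Let F : (0,1) → ℝ be Cardy's function F(r) = (Γ(2/3)/Γ(1/3)²) ∫_r^1 s^{−2/3}(1−s)^{−2/3} ds. Fix real numbers x < y. Then, as (y₋, y₊) → (y, y) within the region {(y₋, y₊) : x < y₋ < y₊}, the quantity 6·(Γ(2/3)/Γ(1/3)²)·r^{−2/3}(1−r)^{−2/3}·(y₊ − y₋) / ((y₊ − x)² · F(r)), where r = (y₋ − x)/(y₊ − x), converges to −2/(x−y). (This quantity equals 6·∂/∂x of log F((y₋−x)/(y₊−x)), the drift of chordal SLE₆ conditioned on Cardy's crossing event, and the limit is the drift of SLE₆(ρ=−2).) -/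

import Mathlib

/-- Cardy's crossing-probability function. -/
noncomputable def F16 (r : ℝ) : ℝ :=
  Real.Gamma (2 / 3) / (Real.Gamma (1 / 3)) ^ 2 *
    ∫ s in r..(1 : ℝ), s ^ (-(2 : ℝ) / 3) * (1 - s) ^ (-(2 : ℝ) / 3)

open MeasureTheory intervalIntegral Set Filter

/-- The integral appearing in Cardy's function. -/
noncomputable def I16 (r : ℝ) : ℝ :=
  ∫ s in r..(1 : ℝ), s ^ (-(2 : ℝ) / 3) * (1 - s) ^ (-(2 : ℝ) / 3)

lemma aux_int1 (r : ℝ) :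
    ∫ s in r..(1 : ℝ), (1 - s) ^ (-(2 : ℝ) / 3) = 3 * (1 - r) ^ ((1 : ℝ) / 3) := by
  rw [intervalIntegral.integral_comp_sub_left (fun u => u ^ (-(2 : ℝ) / 3)) 1]
  rw [integral_rpow (Or.inl (by norm_num))]
  norm_num
  ring

lemma aux_integrable1 (r : ℝ) :
    IntervalIntegrable (fun s => (1 - s) ^ (-(2 : ℝ) / 3)) volume r 1 := by
  have h : IntervalIntegrable (fun u : ℝ => u ^ (-(2 : ℝ) / 3)) volume (1 - r) (1 - 1) :=
    intervalIntegral.intervalIntegrable_rpow' (by norm_num)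
  simpa using h.comp_sub_left 1

lemma aux_integrable2 {r : ℝ} (hr : 0 < r) :
    IntervalIntegrable (fun s => s ^ (-(2 : ℝ) / 3) * (1 - s) ^ (-(2 : ℝ) / 3))
      volume r 1 := by
  apply (aux_integrable1 r).continuousOn_mul
  intro s hs
  have hs0 : 0 < s := lt_of_lt_of_le (lt_min hr one_pos) hs.1
  exact (Real.continuousAt_rpow_const s _ (Or.inl hs0.ne')).continuousWithinAt

lemma I16_lower {r : ℝ} (hr : r ∈ Set.Ioo (0 : ℝ) 1) :
    3 * (1 - r) ^ ((1 : ℝ) / 3) ≤ I16 r := by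
  rw [← aux_int1 r]
  apply intervalIntegral.integral_mono_on hr.2.le (aux_integrable1 r) (aux_integrable2 hr.1)
  intro s hs
  have hs0 : 0 < s := lt_of_lt_of_le hr.1 hs.1
  have h1 : (1 : ℝ) ≤ s ^ (-(2 : ℝ) / 3) := by
    have := Real.rpow_le_rpow_of_nonpos hs0 hs.2 (by norm_num : -(2 : ℝ) / 3 ≤ 0)
    simpa [Real.one_rpow] using this
  have h2 : (0 : ℝ) ≤ (1 - s) ^ (-(2 : ℝ) / 3) := Real.rpow_nonneg (by linarith [hs.2]) _
  nlinarith

lemma I16_upper {r : ℝ} (hr : r ∈ Set.Ioo (0 : ℝ) 1) :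
    I16 r ≤ r ^ (-(2 : ℝ) / 3) * (3 * (1 - r) ^ ((1 : ℝ) / 3)) := by
  rw [← aux_int1 r, ← intervalIntegral.integral_const_mul]
  apply intervalIntegral.integral_mono_on hr.2.le (aux_integrable2 hr.1)
    ((aux_integrable1 r).const_mul _)
  intro s hs
  have hs0 : 0 < s := lt_of_lt_of_le hr.1 hs.1
  have h1 : s ^ (-(2 : ℝ) / 3) ≤ r ^ (-(2 : ℝ) / 3) :=
    Real.rpow_le_rpow_of_nonpos hr.1 hs.1 (by norm_num)
  have h2 : (0 : ℝ) ≤ (1 - s) ^ (-(2 : ℝ) / 3) := Real.rpow_nonneg (by linarith [hs.2]) _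
  exact mul_le_mul_of_nonneg_right h1 h2

lemma I16_pos {r : ℝ} (hr : r ∈ Set.Ioo (0 : ℝ) 1) : 0 < I16 r := by
  have h : (0 : ℝ) < (1 - r) ^ ((1 : ℝ) / 3) :=
    Real.rpow_pos_of_pos (by linarith [hr.2]) _
  linarith [I16_lower hr]

lemma h_tendsto :
    Filter.Tendsto (fun r : ℝ => 6 * r ^ (-(2 : ℝ) / 3) * (1 - r) ^ ((1 : ℝ) / 3) / I16 r)
      (nhdsWithin 1 (Set.Ioo (0 : ℝ) 1)) (nhds 2) := by
  have hmem : ∀ᶠ r in nhdsWithin (1 : ℝ) (Set.Ioo 0 1), r ∈ Set.Ioo (0 : ℝ) 1 :=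
    eventually_mem_nhdsWithin
  have hA : ∀ r ∈ Set.Ioo (0 : ℝ) 1, (1 : ℝ) ≤ r ^ (-(2 : ℝ) / 3) := by
    intro r hr
    have := Real.rpow_le_rpow_of_nonpos hr.1 hr.2.le (by norm_num : -(2 : ℝ) / 3 ≤ 0)
    simpa [Real.one_rpow] using this
  refine tendsto_of_tendsto_of_tendsto_of_le_of_le'
    (g := fun _ : ℝ => (2 : ℝ)) (h := fun r : ℝ => 2 * r ^ (-(2 : ℝ) / 3))
    tendsto_const_nhds ?_ ?_ ?_
  · have hc : ContinuousAt (fun r : ℝ => 2 * r ^ (-(2 : ℝ) / 3)) 1 :=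
      continuousAt_const.mul (Real.continuousAt_rpow_const 1 _ (Or.inl one_ne_zero))
    have h2 := hc.tendsto.mono_left
      (nhdsWithin_le_nhds (s := Set.Ioo (0 : ℝ) 1))
    simpa [Real.one_rpow] using h2
  · filter_upwards [hmem] with r hr
    have hI := I16_pos hr
    have hB : (0 : ℝ) < (1 - r) ^ ((1 : ℝ) / 3) := Real.rpow_pos_of_pos (by linarith [hr.2]) _
    rw [le_div_iff₀ hI]
    have hup := I16_upper hr
    have hA' := hA r hr
    nlinarith
  · filter_upwards [hmem] with r hr
    have hI := I16_pos hr
    have hB : (0 : ℝ) < (1 - r) ^ ((1 : ℝ) / 3) := Real.rpow_pos_of_pos (by linarith [hr.2]) _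
    rw [div_le_iff₀ hI]
    have hlo := I16_lower hr
    have hA' := hA r hr
    nlinarith

/-- As `(y₋,y₊) → (y,y)` within `{x < y₋ < y₊}`, the drift
`6 ∂ₓ log F((y₋-x)/(y₊-x))` of chordal SLE₆ conditioned on Cardy's crossing
event converges to `-2/(x-y)`, the drift of SLE₆(ρ=-2). -/
theorem stmt_16 (x y : ℝ) (hxy : x < y) :
    Filter.Tendsto
      (fun p : ℝ × ℝ =>
        6 * (Real.Gamma (2 / 3) / (Real.Gamma (1 / 3)) ^ 2)
            * ((p.1 - x) / (p.2 - x)) ^ (-(2 : ℝ) / 3)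
            * (1 - (p.1 - x) / (p.2 - x)) ^ (-(2 : ℝ) / 3)
            * (p.2 - p.1)
          / ((p.2 - x) ^ 2 * F16 ((p.1 - x) / (p.2 - x))))
      (nhdsWithin (y, y) {p : ℝ × ℝ | x < p.1 ∧ p.1 < p.2})
      (nhds (-2 / (x - y))) := by
  set C : ℝ := Real.Gamma (2 / 3) / (Real.Gamma (1 / 3)) ^ 2 with hCdef
  have hC : C ≠ 0 := by
    have h1 : 0 < Real.Gamma (2 / 3) := Real.Gamma_pos_of_pos (by norm_num)
    have h2 : 0 < Real.Gamma (1 / 3) := Real.Gamma_pos_of_pos (by norm_num)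
    positivity
  have hyx : (0 : ℝ) < y - x := by linarith
  -- membership facts on the set
  have hmemS : ∀ᶠ p in nhdsWithin ((y : ℝ), (y : ℝ)) {p : ℝ × ℝ | x < p.1 ∧ p.1 < p.2},
      p ∈ {p : ℝ × ℝ | x < p.1 ∧ p.1 < p.2} := eventually_mem_nhdsWithin
  have hrmem : ∀ p : ℝ × ℝ, p ∈ {p : ℝ × ℝ | x < p.1 ∧ p.1 < p.2} →
      (p.1 - x) / (p.2 - x) ∈ Set.Ioo (0 : ℝ) 1 := by
    intro p hp
    have h1 : 0 < p.1 - x := by linarith [hp.1]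
    have h2 : 0 < p.2 - x := by linarith [hp.1, hp.2]
    exact ⟨div_pos h1 h2, (div_lt_one h2).mpr (by linarith [hp.2])⟩
  -- the map r
  have hrt : Filter.Tendsto (fun p : ℝ × ℝ => (p.1 - x) / (p.2 - x))
      (nhdsWithin ((y : ℝ), (y : ℝ)) {p : ℝ × ℝ | x < p.1 ∧ p.1 < p.2})
      (nhdsWithin 1 (Set.Ioo (0 : ℝ) 1)) := by
    rw [tendsto_nhdsWithin_iff]
    constructor
    · have hc : ContinuousAt (fun p : ℝ × ℝ => (p.1 - x) / (p.2 - x)) (y, y) := by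
        apply ContinuousAt.div (by fun_prop) (by fun_prop)
        simpa using hyx.ne'
      have h1 : Filter.Tendsto (fun p : ℝ × ℝ => (p.1 - x) / (p.2 - x))
          (nhds ((y : ℝ), (y : ℝ))) (nhds 1) := by
        simpa [div_self hyx.ne'] using hc.tendsto
      exact h1.mono_left nhdsWithin_le_nhds
    · filter_upwards [hmemS] with p hp using hrmem p hp
  -- the limit of the nice form
  have hinv : Filter.Tendsto (fun p : ℝ × ℝ => (p.2 - x)⁻¹)
      (nhdsWithin ((y : ℝ), (y : ℝ)) {p : ℝ × ℝ | x < p.1 ∧ p.1 < p.2})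
      (nhds (y - x)⁻¹) := by
    have hc : ContinuousAt (fun p : ℝ × ℝ => (p.2 - x)⁻¹) (y, y) := by
      apply ContinuousAt.inv₀ (by fun_prop)
      simpa using hyx.ne'
    exact hc.tendsto.mono_left nhdsWithin_le_nhds
  have hnice : Filter.Tendsto
      (fun p : ℝ × ℝ =>
        6 * ((p.1 - x) / (p.2 - x)) ^ (-(2 : ℝ) / 3)
          * (1 - (p.1 - x) / (p.2 - x)) ^ ((1 : ℝ) / 3)
          / I16 ((p.1 - x) / (p.2 - x)) * (p.2 - x)⁻¹)
      (nhdsWithin ((y : ℝ), (y : ℝ)) {p : ℝ × ℝ | x < p.1 ∧ p.1 < p.2})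
      (nhds (2 * (y - x)⁻¹)) :=
    (h_tendsto.comp hrt).mul hinv
  have hval : -2 / (x - y) = 2 * (y - x)⁻¹ := by
    rw [div_eq_iff (show x - y ≠ 0 by linarith)]
    field_simp
    ring
  rw [hval]
  refine Filter.Tendsto.congr' ?_ hnice
  filter_upwards [hmemS] with p hp
  set r : ℝ := (p.1 - x) / (p.2 - x) with hrdef
  have hr := hrmem p hp
  have ht : (0 : ℝ) < p.2 - x := by linarith [hp.1, hp.2]
  have hI := I16_pos hr
  have hB : (0 : ℝ) < 1 - r := by linarith [hr.2]
  have h13 : (1 - r) ^ (-(2 : ℝ) / 3) * (1 - r) = (1 - r) ^ ((1 : ℝ) / 3) := by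
    have h := (Real.rpow_add hB (-(2 : ℝ) / 3) 1).symm
    rw [Real.rpow_one] at h
    norm_num at h
    convert h using 2 <;> norm_num
  have hsplit : p.2 - p.1 = (1 - r) * (p.2 - x) := by
    rw [hrdef]
    field_simp
    ring
  have hF : F16 r = C * I16 r := rfl
  have key : 6 * C * r ^ (-(2 : ℝ) / 3) * (1 - r) ^ (-(2 : ℝ) / 3)
        * ((1 - r) * (p.2 - x)) / ((p.2 - x) ^ 2 * (C * I16 r))
      = 6 * r ^ (-(2 : ℝ) / 3) * (1 - r) ^ ((1 : ℝ) / 3) / I16 r * (p.2 - x)⁻¹ := by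
    rw [show 6 * C * r ^ (-(2 : ℝ) / 3) * (1 - r) ^ (-(2 : ℝ) / 3) * ((1 - r) * (p.2 - x))
          = (6 * r ^ (-(2 : ℝ) / 3) * (1 - r) ^ ((1 : ℝ) / 3)) * (C * (p.2 - x)) by
        rw [← h13]; ring,
      show (p.2 - x) ^ 2 * (C * I16 r) = (I16 r * (p.2 - x)) * (C * (p.2 - x)) by ring,
      mul_div_mul_right _ _ (mul_ne_zero hC ht.ne'), ← div_div, div_eq_mul_inv]
  rw [hF, hsplit, key]
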